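/- Let a := √(2/5) and M := 0. Then: (i) with ε = −1, the function k(t) = 3a·tanh(a·t) satisfies on ℝ both space extremal equations (E1): k''' + (3/2)k·k'' + (1/2)(k')² + (1/2)k²·k' − (1/5)ε·k' + (6/5)M' = 0 and (E2): k'' + (2/3)k·k' + (5/6)ε·k'·M − (3/2)ε·k·M' − ε·M'' = 0; (ii) with ε = 1, the function k(t) = −3a·tan(a·t) satisfies both (E1) and (E2) on every open interval on which tan(a·t) is defined. -/

import Mathlib

/-- The first space extremal equation (E1) at a point `t`. -/
def SpaceExtremalEq1 (ε : ℝ) (k M : ℝ → ℝ) (t : ℝ) : Prop :=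
  iteratedDeriv 3 k t + (3/2) * k t * iteratedDeriv 2 k t
    + (1/2) * (deriv k t)^2 + (1/2) * (k t)^2 * deriv k t
    - (1/5) * ε * deriv k t + (6/5) * deriv M t = 0

/-- The second space extremal equation (E2) at a point `t`. -/
def SpaceExtremalEq2 (ε : ℝ) (k M : ℝ → ℝ) (t : ℝ) : Prop :=
  iteratedDeriv 2 k t + (2/3) * k t * deriv k t + (5/6) * ε * deriv k t * M t
    - (3/2) * ε * k t * deriv M t - ε * iteratedDeriv 2 M t = 0

noncomputable def aa : ℝ := Real.sqrt (2/5)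

lemma haa : aa ^ 2 = 2/5 := Real.sq_sqrt (by norm_num)

lemma hasDerivAt_tanh' (x : ℝ) :
    HasDerivAt Real.tanh (1 - Real.tanh x ^ 2) x := by
  have e : Real.tanh = fun y => Real.sinh y / Real.cosh y :=
    funext fun y => Real.tanh_eq_sinh_div_cosh y
  have h := (Real.hasDerivAt_sinh x).div (Real.hasDerivAt_cosh x) (Real.cosh_pos x).ne'
  rw [e]
  refine h.congr_deriv ?_
  have hc : Real.cosh x ≠ 0 := (Real.cosh_pos x).ne'
  field_simp

lemma hasDerivAt_tan' {x : ℝ} (h : Real.cos x ≠ 0) :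
    HasDerivAt Real.tan (1 + Real.tan x ^ 2) x := by
  have h1 := Real.hasDerivAt_tan h
  convert h1 using 1
  rw [Real.tan_eq_sin_div_cos]
  field_simp
  linear_combination Real.cos_sq_add_sin_sq x

-- abbreviations for the tanh case
lemma hA (u : ℝ) : HasDerivAt (fun u : ℝ => aa * u) aa u := by
  simpa using (hasDerivAt_id u).const_mul aa

lemma hT (u : ℝ) : HasDerivAt (fun u => Real.tanh (aa * u))
    ((1 - Real.tanh (aa * u) ^ 2) * aa) u :=
  (hasDerivAt_tanh' (aa * u)).comp u (hA u)

lemma th1 (u : ℝ) : HasDerivAt (fun u => 3 * aa * Real.tanh (aa * u))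
    (3 * aa ^ 2 * (1 - Real.tanh (aa * u) ^ 2)) u := by
  have := (hT u).const_mul (3 * aa)
  exact this.congr_deriv (by ring)

lemma th2 (u : ℝ) : HasDerivAt (fun u => 3 * aa ^ 2 * (1 - Real.tanh (aa * u) ^ 2))
    (-6 * aa ^ 3 * (Real.tanh (aa * u) * (1 - Real.tanh (aa * u) ^ 2))) u := by
  have := (((hT u).pow 2).const_sub 1).const_mul (3 * aa ^ 2)
  exact this.congr_deriv (by ring)

lemma th3 (u : ℝ) : HasDerivAt
    (fun u => -6 * aa ^ 3 * (Real.tanh (aa * u) * (1 - Real.tanh (aa * u) ^ 2)))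
    (-6 * aa ^ 4 * ((1 - Real.tanh (aa * u) ^ 2) * (1 - 3 * Real.tanh (aa * u) ^ 2))) u := by
  have := ((hT u).mul (((hT u).pow 2).const_sub 1)).const_mul (-6 * aa ^ 3)
  exact this.congr_deriv (by simp only [Pi.pow_apply]; ring)

-- abbreviations for the tan case
lemma tg0 {u : ℝ} (hu : Real.cos (aa * u) ≠ 0) :
    HasDerivAt (fun u => Real.tan (aa * u))
      ((1 + Real.tan (aa * u) ^ 2) * aa) u :=
  (hasDerivAt_tan' hu).comp u (hA u)

lemma tg1 {u : ℝ} (hu : Real.cos (aa * u) ≠ 0) :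
    HasDerivAt (fun u => -3 * aa * Real.tan (aa * u))
      (-3 * aa ^ 2 * (1 + Real.tan (aa * u) ^ 2)) u := by
  have := (tg0 hu).const_mul (-3 * aa)
  exact this.congr_deriv (by ring)

lemma tg2 {u : ℝ} (hu : Real.cos (aa * u) ≠ 0) :
    HasDerivAt (fun u => -3 * aa ^ 2 * (1 + Real.tan (aa * u) ^ 2))
      (-6 * aa ^ 3 * (Real.tan (aa * u) * (1 + Real.tan (aa * u) ^ 2))) u := by
  have := (((tg0 hu).pow 2).const_add 1).const_mul (-3 * aa ^ 2)
  exact this.congr_deriv (by ring)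

lemma tg3 {u : ℝ} (hu : Real.cos (aa * u) ≠ 0) :
    HasDerivAt (fun u => -6 * aa ^ 3 * (Real.tan (aa * u) * (1 + Real.tan (aa * u) ^ 2)))
      (-6 * aa ^ 4 * ((1 + Real.tan (aa * u) ^ 2) * (1 + 3 * Real.tan (aa * u) ^ 2))) u := by
  have := ((tg0 hu).mul (((tg0 hu).pow 2).const_add 1)).const_mul (-6 * aa ^ 3)
  exact this.congr_deriv (by simp only [Pi.pow_apply]; ring)

lemma haa4 : aa ^ 4 = 4/25 := by
  have := haa; nlinarith [haa]

lemma dM : deriv (fun _ : ℝ => (0:ℝ)) = fun _ => 0 := by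
  funext u; simp

lemma d2M : iteratedDeriv 2 (fun _ : ℝ => (0:ℝ)) = fun _ => 0 := by
  rw [iteratedDeriv_succ, iteratedDeriv_one, dM]
  funext u; simp

/-- With `a = √(2/5)` and `M ≡ 0`: for `ε = −1` the function `3a·tanh(a·t)`
solves the space extremal equations on ℝ, and for `ε = 1` the function
`−3a·tan(a·t)` solves them wherever `tan(a·t)` is defined. -/
theorem stmt_17 :
    (∀ t : ℝ,
      SpaceExtremalEq1 (-1)
        (fun u => 3 * Real.sqrt (2/5) * Real.tanh (Real.sqrt (2/5) * u))
        (fun _ => 0) t ∧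
      SpaceExtremalEq2 (-1)
        (fun u => 3 * Real.sqrt (2/5) * Real.tanh (Real.sqrt (2/5) * u))
        (fun _ => 0) t) ∧
    (∀ t : ℝ, Real.cos (Real.sqrt (2/5) * t) ≠ 0 →
      SpaceExtremalEq1 1
        (fun u => -3 * Real.sqrt (2/5) * Real.tan (Real.sqrt (2/5) * u))
        (fun _ => 0) t ∧
      SpaceExtremalEq2 1
        (fun u => -3 * Real.sqrt (2/5) * Real.tan (Real.sqrt (2/5) * u))
        (fun _ => 0) t) := by
  constructor
  · intro t
    set k : ℝ → ℝ := fun u => 3 * aa * Real.tanh (aa * u) with hk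
    have dk : deriv k = fun u => 3 * aa ^ 2 * (1 - Real.tanh (aa * u) ^ 2) :=
      funext fun u => (th1 u).deriv
    have d2k : iteratedDeriv 2 k =
        fun u => -6 * aa ^ 3 * (Real.tanh (aa * u) * (1 - Real.tanh (aa * u) ^ 2)) := by
      rw [iteratedDeriv_succ, iteratedDeriv_one, dk]
      exact funext fun u => (th2 u).deriv
    have d3k : iteratedDeriv 3 k t =
        -6 * aa ^ 4 * ((1 - Real.tanh (aa * t) ^ 2) * (1 - 3 * Real.tanh (aa * t) ^ 2)) := by
      rw [iteratedDeriv_succ, d2k]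
      exact (th3 t).deriv
    constructor
    · show iteratedDeriv 3 k t + (3/2) * k t * iteratedDeriv 2 k t
        + (1/2) * (deriv k t)^2 + (1/2) * (k t)^2 * deriv k t
        - (1/5) * (-1:ℝ) * deriv k t + (6/5) * deriv (fun _ => (0:ℝ)) t = 0
      rw [d3k, d2k, dk, dM]
      set b := Real.tanh (aa * t)
      simp only [hk]
      linear_combination (-(3/2) * (1 - b ^ 2)) * haa4 + ((3/5) * (1 - b ^ 2)) * haa
    · show iteratedDeriv 2 k t + (2/3) * k t * deriv k t
        + (5/6) * (-1:ℝ) * deriv k t * (0:ℝ)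
        - (3/2) * (-1:ℝ) * k t * deriv (fun _ => (0:ℝ)) t
        - (-1:ℝ) * iteratedDeriv 2 (fun _ => (0:ℝ)) t = 0
      rw [d2k, dk, dM, d2M]
      simp only [hk]
      ring
  · intro t ht
    set k : ℝ → ℝ := fun u => -3 * aa * Real.tan (aa * u) with hk
    have hopen : IsOpen {u : ℝ | Real.cos (aa * u) ≠ 0} :=
      isOpen_compl_singleton.preimage (by fun_prop)
    have hmem : ∀ {u : ℝ}, Real.cos (aa * u) ≠ 0 →
        {u : ℝ | Real.cos (aa * u) ≠ 0} ∈ nhds u := fun hu => hopen.mem_nhds hu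
    have dkev : ∀ {u : ℝ}, Real.cos (aa * u) ≠ 0 →
        deriv k =ᶠ[nhds u] fun v => -3 * aa ^ 2 * (1 + Real.tan (aa * v) ^ 2) := by
      intro u hu
      filter_upwards [hmem hu] with v hv
      exact (tg1 hv).deriv
    have d2k : ∀ {u : ℝ}, Real.cos (aa * u) ≠ 0 → iteratedDeriv 2 k u =
        -6 * aa ^ 3 * (Real.tan (aa * u) * (1 + Real.tan (aa * u) ^ 2)) := by
      intro u hu
      rw [iteratedDeriv_succ, iteratedDeriv_one, (dkev hu).deriv_eq]
      exact (tg2 hu).deriv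
    have d2kev : iteratedDeriv 2 k =ᶠ[nhds t]
        fun v => -6 * aa ^ 3 * (Real.tan (aa * v) * (1 + Real.tan (aa * v) ^ 2)) := by
      filter_upwards [hmem ht] with v hv
      exact d2k hv
    have d3k : iteratedDeriv 3 k t =
        -6 * aa ^ 4 * ((1 + Real.tan (aa * t) ^ 2) * (1 + 3 * Real.tan (aa * t) ^ 2)) := by
      rw [iteratedDeriv_succ, d2kev.deriv_eq]
      exact (tg3 ht).deriv
    constructor
    · show iteratedDeriv 3 k t + (3/2) * k t * iteratedDeriv 2 k t
        + (1/2) * (deriv k t)^2 + (1/2) * (k t)^2 * deriv k t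
        - (1/5) * (1:ℝ) * deriv k t + (6/5) * deriv (fun _ => (0:ℝ)) t = 0
      rw [d3k, d2k ht, (tg1 ht).deriv, dM]
      set b := Real.tan (aa * t)
      simp only [hk]
      linear_combination (-(3/2) * (1 + b ^ 2)) * haa4 + ((3/5) * (1 + b ^ 2)) * haa
    · show iteratedDeriv 2 k t + (2/3) * k t * deriv k t
        + (5/6) * (1:ℝ) * deriv k t * (0:ℝ)
        - (3/2) * (1:ℝ) * k t * deriv (fun _ => (0:ℝ)) t
        - (1:ℝ) * iteratedDeriv 2 (fun _ => (0:ℝ)) t = 0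
      rw [d2k ht, (tg1 ht).deriv, dM, d2M]
      simp only [hk]
      ring
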